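/- Let F : [0, t₀) → ℝ be C¹ with F(0) = 0, F' ≥ 0, and √(F'(t)) ≤ m₀F(t) + c for constants m₀, c > 0, where t₀ = 1/(c·m₀). Then F(t) ≤ c²t/(1 − m₀ c t) for all t ∈ [0, t₀). -/

import Mathlib

open Real

theorem stmt_9 (m₀ c : ℝ) (hm : 0 < m₀) (hc : 0 < c)
    (F F' : ℝ → ℝ)
    (hderiv : ∀ t ∈ Set.Ico (0:ℝ) (1 / (c * m₀)), HasDerivAt F (F' t) t)
    (hF0 : F 0 = 0)
    (hmono : ∀ t ∈ Set.Ico (0:ℝ) (1 / (c * m₀)), 0 ≤ F' t)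
    (hineq : ∀ t ∈ Set.Ico (0:ℝ) (1 / (c * m₀)),
      Real.sqrt (F' t) ≤ m₀ * F t + c) :
    ∀ t ∈ Set.Ico (0:ℝ) (1 / (c * m₀)),
      F t ≤ c ^ 2 * t / (1 - m₀ * c * t) := by
  intro t ht
  set t₀ : ℝ := 1 / (c * m₀) with ht₀def
  have ht₀ : 0 < t₀ := by positivity
  have hIco : Set.Ico (0:ℝ) t₀ = Set.Ico (0:ℝ) (1 / (c * m₀)) := rfl
  have hsub : interior (Set.Ico (0:ℝ) t₀) ⊆ Set.Ico (0:ℝ) t₀ := interior_subset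
  have hint : interior (Set.Ico (0:ℝ) t₀) = Set.Ioo 0 t₀ := interior_Ico
  -- F is monotone on Ico, hence nonneg
  have hFcont : ContinuousOn F (Set.Ico (0:ℝ) t₀) := fun x hx =>
    ((hderiv x hx).continuousAt).continuousWithinAt
  have hFmono : MonotoneOn F (Set.Ico (0:ℝ) t₀) := by
    apply monotoneOn_of_hasDerivWithinAt_nonneg (convex_Ico 0 t₀) hFcont
      (f' := F')
    · intro x hx
      exact ((hderiv x (hsub hx)).hasDerivWithinAt)
    · intro x hx
      exact hmono x (hsub hx)
  have hFnn : ∀ s ∈ Set.Ico (0:ℝ) t₀, 0 ≤ F s := by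
    intro s hs
    have := hFmono (Set.left_mem_Ico.2 ht₀) hs hs.1
    rwa [hF0] at this
  have hdpos : ∀ s ∈ Set.Ico (0:ℝ) t₀, 0 < m₀ * F s + c := by
    intro s hs
    have := hFnn s hs
    nlinarith
  -- G t = m₀ * t + (m₀ * F t + c)⁻¹ is monotone
  set G : ℝ → ℝ := fun s => m₀ * s + (m₀ * F s + c)⁻¹ with hGdef
  set G' : ℝ → ℝ := fun s => m₀ - m₀ * F' s / (m₀ * F s + c) ^ 2 with hG'def
  have hGderiv : ∀ s ∈ Set.Ico (0:ℝ) t₀, HasDerivAt G (G' s) s := by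
    intro s hs
    have h1 : HasDerivAt (fun u => m₀ * F u + c) (m₀ * F' s) s :=
      ((hderiv s hs).const_mul m₀).add_const c
    have h2 : HasDerivAt (fun u => (m₀ * F u + c)⁻¹)
        (-(m₀ * F' s) / (m₀ * F s + c) ^ 2) s := h1.inv (hdpos s hs).ne'
    have h3 := (hasDerivAt_id s).const_mul m₀ |>.add h2
    have h4 : G' s = m₀ * 1 + -(m₀ * F' s) / (m₀ * F s + c) ^ 2 := by
      simp only [hG'def]
      ring
    rw [h4]
    exact h3
  have hG'nn : ∀ s ∈ Set.Ico (0:ℝ) t₀, 0 ≤ G' s := by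
    intro s hs
    have hsq : F' s ≤ (m₀ * F s + c) ^ 2 := by
      have h1 := hineq s hs
      have h2 := hmono s hs
      nlinarith [Real.sq_sqrt h2, Real.sqrt_nonneg (F' s)]
    have hd := hdpos s hs
    have : m₀ * F' s / (m₀ * F s + c) ^ 2 ≤ m₀ := by
      rw [div_le_iff₀ (by positivity)]
      nlinarith
    simp only [hG'def]
    linarith
  have hGmono : MonotoneOn G (Set.Ico (0:ℝ) t₀) := by
    apply monotoneOn_of_hasDerivWithinAt_nonneg (convex_Ico 0 t₀)
      (f' := G')
    · intro x hx
      exact ((hGderiv x hx).continuousAt).continuousWithinAt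
    · intro x hx
      exact ((hGderiv x (hsub hx)).hasDerivWithinAt)
    · intro x hx
      exact hG'nn x (hsub hx)
  have hG0 : G 0 = c⁻¹ := by simp [hGdef, hF0]
  have hGt : c⁻¹ ≤ G t := by
    rw [← hG0]
    exact hGmono (Set.left_mem_Ico.2 ht₀) ht ht.1
  -- algebra
  have htlt : m₀ * c * t < 1 := by
    have h1 : t < t₀ := ht.2
    rw [ht₀def] at h1
    have := (lt_div_iff₀ (by positivity : (0:ℝ) < c * m₀)).1 h1
    linarith
  have hppos : 0 < 1 - m₀ * c * t := by linarith
  have hdt := hdpos t ht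
  have hkey : c⁻¹ - m₀ * t ≤ (m₀ * F t + c)⁻¹ := by
    simp only [hGdef] at hGt; linarith
  have hplow : (1 - m₀ * c * t) / c ≤ (m₀ * F t + c)⁻¹ := by
    rw [sub_div]
    have : m₀ * c * t / c = m₀ * t := by field_simp
    rw [this]
    simpa using hkey
  have hbound : m₀ * F t + c ≤ c / (1 - m₀ * c * t) := by
    have hppos' : 0 < (1 - m₀ * c * t) / c := by positivity
    have := (le_inv_comm₀ hppos' hdt).1 (by simpa using hplow)
    calc m₀ * F t + c ≤ ((1 - m₀ * c * t) / c)⁻¹ := this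
      _ = c / (1 - m₀ * c * t) := by rw [inv_div]
  rw [le_div_iff₀ hppos] at hbound
  rw [le_div_iff₀ hppos]
  nlinarith [hbound, hm, hppos]
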